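/- Let c, κ be positive integers. For k = 1, 2, let μ_k ∈ ℝ^{cκ} be a row vector (indexed by [c]×[κ]) with all entries positive, let R_k be a real cκ × cκ matrix with diag(μ_k)·R_k symmetric, let t_k ∈ ℝ, let σ̂_k be a permutation of [c] and σ̃_k a permutation of [κ], and let P_k be the permutation matrix on [c]×[κ] of the permutation (i,j) ↦ (σ̂_k(i), σ̃_k(j)). If μ₁P₁ = μ₂P₂ and P₁ᵀ·exp(R₁t₁)·J = P₂ᵀ·exp(R₂t₂)·J, then σ̃₁ = σ̃₂. -/

import Mathlib

open Matrix

/-- The permutation matrix of a permutation `σ`. -/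
def permMatrix {n : Type*} [DecidableEq n] (σ : Equiv.Perm n) : Matrix n n ℝ :=
  Matrix.of fun i j => if σ i = j then 1 else 0

/-- The matrix `J = 1_cᵀ ⊗ I_κ` hiding class information. -/
def Jmat (c κ : ℕ) : Matrix (Fin c × Fin κ) (Fin κ) ℝ :=
  Matrix.of fun p k => if p.2 = k then 1 else 0

lemma diag_mul_exp_pos {n : Type*} [Fintype n] [DecidableEq n]
    (μ : n → ℝ) (hμ : ∀ x, 0 < μ x) (R : Matrix n n ℝ)
    (hsym : (Matrix.diagonal μ * R).IsSymm) (t : ℝ) :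
    (Matrix.diagonal μ * NormedSpace.exp (t • R)).IsSymm ∧
      ∀ x : n → ℝ, x ≠ 0 →
        0 < x ⬝ᵥ ((Matrix.diagonal μ * NormedSpace.exp (t • R)) *ᵥ x) := by
  classical
  set A := t • R with hA
  have hsymA : ∀ p q, μ p * A p q = μ q * A q p := by
    intro p q
    have h := congr_fun (congr_fun hsym q) p
    rw [Matrix.transpose_apply] at h
    rw [Matrix.diagonal_mul, Matrix.diagonal_mul] at h
    simp only [hA, Matrix.smul_apply, smul_eq_mul]
    linear_combination t * h
  set d : n → ℝ := fun p => Real.sqrt (μ p) with hd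
  have hdpos : ∀ p, 0 < d p := fun p => Real.sqrt_pos.2 (hμ p)
  have hdd : ∀ p, d p * d p = μ p := fun p => Real.mul_self_sqrt (hμ p).le
  set D := Matrix.diagonal d with hD
  set Dinv := Matrix.diagonal (fun p => (d p)⁻¹) with hDinv
  have hDDinv : D * Dinv = 1 := by
    rw [hD, hDinv, Matrix.diagonal_mul_diagonal, ← Matrix.diagonal_one]
    exact congrArg _ (funext fun p => mul_inv_cancel₀ (hdpos p).ne')
  have hDinvD : Dinv * D = 1 := by
    rw [hD, hDinv, Matrix.diagonal_mul_diagonal, ← Matrix.diagonal_one]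
    exact congrArg _ (funext fun p => inv_mul_cancel₀ (hdpos p).ne')
  set u : (Matrix n n ℝ)ˣ := ⟨D, Dinv, hDDinv, hDinvD⟩ with hu
  set S := D * A * Dinv with hS
  have hSentry : ∀ p q, S p q = d p * A p q * (d q)⁻¹ := by
    intro p q
    rw [hS, Matrix.mul_diagonal, Matrix.diagonal_mul]
  have hSsymm : Sᵀ = S := by
    ext p q
    rw [Matrix.transpose_apply, hSentry, hSentry]
    have key := hsymA p q
    have h1 := (hdpos p).ne'
    have h2 := (hdpos q).ne'
    field_simp
    linear_combination A q p * hdd q - A p q * hdd p - key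
  have hAconj : A = Dinv * S * D := by
    rw [hS, show D * A * Dinv = D * (A * Dinv) from by rw [Matrix.mul_assoc],
      ← Matrix.mul_assoc Dinv D _, hDinvD, one_mul, Matrix.mul_assoc, hDinvD, mul_one]
  have hexpA : NormedSpace.exp A = Dinv * NormedSpace.exp S * D := by
    have h := Matrix.exp_units_conj' u S
    have hu1 : ((u⁻¹ : (Matrix n n ℝ)ˣ) : Matrix n n ℝ) = Dinv := rfl
    have hu2 : ((u : (Matrix n n ℝ)ˣ) : Matrix n n ℝ) = D := rfl
    rw [hu1, hu2] at h
    rw [hAconj, h]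
  set B := NormedSpace.exp ((1/2 : ℝ) • S) with hB
  have hBB : NormedSpace.exp S = B * B := by
    have h2 : ((1/2 : ℝ) • S) + ((1/2 : ℝ) • S) = S := by
      rw [← add_smul]; norm_num
    calc NormedSpace.exp S = NormedSpace.exp ((1/2 : ℝ) • S + (1/2 : ℝ) • S) := by
          rw [h2]
      _ = B * B := Matrix.exp_add_of_commute _ _ (Commute.refl _)
  have hBsymm : Bᵀ = B := by
    rw [hB, ← Matrix.exp_transpose, Matrix.transpose_smul, hSsymm]
  have hfact : Matrix.diagonal μ * NormedSpace.exp A = (B * D)ᵀ * (B * D) := by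
    have hDμ : Matrix.diagonal μ = D * D := by
      rw [hD, Matrix.diagonal_mul_diagonal]
      exact congrArg _ (funext fun p => (hdd p).symm)
    rw [hexpA, hBB, hDμ, Matrix.transpose_mul, hD, Matrix.diagonal_transpose, ← hD, hBsymm]
    simp only [Matrix.mul_assoc]
    rw [← Matrix.mul_assoc D Dinv, hDDinv, one_mul]
  have hCunit : IsUnit (B * D) := (Matrix.isUnit_exp _).mul u.isUnit
  have hCinj : ∀ x : n → ℝ, (B * D) *ᵥ x = 0 → x = 0 := by
    intro x hx
    obtain ⟨cu, hcu⟩ := hCunit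
    have h1 : ((cu⁻¹ : (Matrix n n ℝ)ˣ) : Matrix n n ℝ) * (B * D) = 1 := by
      rw [← hcu]; exact cu.inv_mul
    calc x = (((cu⁻¹ : (Matrix n n ℝ)ˣ) : Matrix n n ℝ) * (B * D)) *ᵥ x := by
          rw [h1, Matrix.one_mulVec]
      _ = ((cu⁻¹ : (Matrix n n ℝ)ˣ) : Matrix n n ℝ) *ᵥ ((B * D) *ᵥ x) := by
          rw [Matrix.mulVec_mulVec]
      _ = 0 := by rw [hx, Matrix.mulVec_zero]
  constructor
  · show (Matrix.diagonal μ * NormedSpace.exp A)ᵀ = _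
    rw [hfact, Matrix.transpose_mul, Matrix.transpose_transpose]
  · intro x hx
    rw [hfact, ← Matrix.mulVec_mulVec, Matrix.dotProduct_mulVec, Matrix.vecMul_transpose]
    set y := (B * D) *ᵥ x with hy
    have hyne : y ≠ 0 := fun h => hx (hCinj x h)
    have h1 : y ⬝ᵥ y ≠ 0 := fun h => hyne (dotProduct_self_eq_zero.1 h)
    have h2 : 0 ≤ y ⬝ᵥ y := Finset.sum_nonneg fun i _ => mul_self_nonneg _
    exact lt_of_le_of_ne h2 (Ne.symm h1)

lemma vecMul_permMatrix {n : Type*} [Fintype n] [DecidableEq n] (v : n → ℝ)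
    (σ : Equiv.Perm n) (q : n) :
    Matrix.vecMul v (permMatrix σ) q = v (σ.symm q) := by
  classical
  simp only [Matrix.vecMul, dotProduct, permMatrix, Matrix.of_apply, mul_boole,
    Equiv.apply_eq_iff_eq_symm_apply]
  simp

lemma permT_mul_J_apply {c κ : ℕ} (σ : Equiv.Perm (Fin c × Fin κ))
    (E : Matrix (Fin c × Fin κ) (Fin c × Fin κ) ℝ) (p : Fin c × Fin κ) (k : Fin κ) :
    ((permMatrix σ)ᵀ * E * Jmat c κ) p k = ∑ i : Fin c, E (σ.symm p) (i, k) := by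
  classical
  have h1 : ∀ q, ((permMatrix σ)ᵀ * E) p q = E (σ.symm p) q := by
    intro q
    simp only [Matrix.mul_apply, Matrix.transpose_apply, permMatrix, Matrix.of_apply,
      boole_mul, Equiv.apply_eq_iff_eq_symm_apply]
    simp
  rw [Matrix.mul_apply]
  simp only [h1]
  simp only [Jmat, Matrix.of_apply, mul_boole]
  rw [Fintype.sum_prod_type]
  simp

lemma JtNJ_apply {c κ : ℕ} (N : Matrix (Fin c × Fin κ) (Fin c × Fin κ) ℝ) (j k : Fin κ) :
    ((Jmat c κ)ᵀ * N * Jmat c κ) j k = ∑ i : Fin c, ∑ i' : Fin c, N (i, j) (i', k) := by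
  classical
  have h1 : ∀ q, ((Jmat c κ)ᵀ * N) j q = ∑ i : Fin c, N (i, j) q := by
    intro q
    simp only [Matrix.mul_apply, Matrix.transpose_apply, Jmat, Matrix.of_apply, boole_mul]
    rw [Fintype.sum_prod_type]
    simp
  rw [Matrix.mul_apply]
  simp only [h1]
  simp only [Jmat, Matrix.of_apply, mul_boole]
  rw [Fintype.sum_prod_type]
  simp only [Finset.sum_ite_eq', Finset.mem_univ, if_true]
  exact Finset.sum_comm

/-- The base permutation `σ̃` is determined by `μP` and `Pᵀ·exp(Rt)·J` when `P`
has the product form `P̂ ⊗ P̃`. -/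
theorem base_permutation_determined {c κ : ℕ} (hc : 0 < c) (hκ : 0 < κ)
    (μ₁ μ₂ : Fin c × Fin κ → ℝ) (hμ₁ : ∀ x, 0 < μ₁ x) (hμ₂ : ∀ x, 0 < μ₂ x)
    (R₁ R₂ : Matrix (Fin c × Fin κ) (Fin c × Fin κ) ℝ)
    (hsym₁ : (Matrix.diagonal μ₁ * R₁).IsSymm)
    (hsym₂ : (Matrix.diagonal μ₂ * R₂).IsSymm)
    (t₁ t₂ : ℝ)
    (σc₁ σc₂ : Equiv.Perm (Fin c)) (σκ₁ σκ₂ : Equiv.Perm (Fin κ))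
    (hμ : Matrix.vecMul μ₁ (permMatrix (Equiv.prodCongr σc₁ σκ₁)) =
      Matrix.vecMul μ₂ (permMatrix (Equiv.prodCongr σc₂ σκ₂)))
    (hM : (permMatrix (Equiv.prodCongr σc₁ σκ₁))ᵀ * NormedSpace.exp (t₁ • R₁) *
        Jmat c κ =
      (permMatrix (Equiv.prodCongr σc₂ σκ₂))ᵀ * NormedSpace.exp (t₂ • R₂) *
        Jmat c κ) :
    σκ₁ = σκ₂ := by
  classical
  by_cases hfin : σκ₁ = σκ₂
  · exact hfin
  exfalso
  obtain ⟨hsN₁, hpN₁⟩ := diag_mul_exp_pos μ₁ hμ₁ R₁ hsym₁ t₁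
  obtain ⟨hsN₂, hpN₂⟩ := diag_mul_exp_pos μ₂ hμ₂ R₂ hsym₂ t₂
  set σ₁ := Equiv.prodCongr σc₁ σκ₁ with hσ₁
  set σ₂ := Equiv.prodCongr σc₂ σκ₂ with hσ₂
  set E₁ := NormedSpace.exp (t₁ • R₁) with hE₁
  set E₂ := NormedSpace.exp (t₂ • R₂) with hE₂
  set N₁ := Matrix.diagonal μ₁ * E₁ with hN₁
  set N₂ := Matrix.diagonal μ₂ * E₂ with hN₂
  set M₁ := (Jmat c κ)ᵀ * N₁ * Jmat c κ with hM₁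
  set M₂ := (Jmat c κ)ᵀ * N₂ * Jmat c κ with hM₂
  -- entrywise symmetry of N₁, N₂
  have hNs₁ : ∀ a b, N₁ b a = N₁ a b := by
    intro a b
    have h := congr_fun (congr_fun hsN₁ a) b
    rwa [Matrix.transpose_apply] at h
  have hNs₂ : ∀ a b, N₂ b a = N₂ a b := by
    intro a b
    have h := congr_fun (congr_fun hsN₂ a) b
    rwa [Matrix.transpose_apply] at h
  -- symmetry of M's
  have hMsgen : ∀ (N : Matrix (Fin c × Fin κ) (Fin c × Fin κ) ℝ),
      (∀ a b, N b a = N a b) → ∀ j k : Fin κ,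
      ((Jmat c κ)ᵀ * N * Jmat c κ) j k = ((Jmat c κ)ᵀ * N * Jmat c κ) k j := by
    intro N hN j k
    rw [JtNJ_apply, JtNJ_apply, Finset.sum_comm]
    exact Finset.sum_congr rfl fun a _ => Finset.sum_congr rfl fun b _ => hN (a, k) (b, j)
  have hMsym₁ : ∀ j k, M₁ j k = M₁ k j := fun j k => by
    rw [hM₁]; exact hMsgen N₁ hNs₁ j k
  have hMsym₂ : ∀ j k, M₂ j k = M₂ k j := fun j k => by
    rw [hM₂]; exact hMsgen N₂ hNs₂ j k
  -- positivity of M's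
  have hMpgen : ∀ (N : Matrix (Fin c × Fin κ) (Fin c × Fin κ) ℝ),
      (∀ x, x ≠ 0 → 0 < x ⬝ᵥ N *ᵥ x) → ∀ v : Fin κ → ℝ, v ≠ 0 →
      0 < v ⬝ᵥ ((Jmat c κ)ᵀ * N * Jmat c κ) *ᵥ v := by
    intro N hp v hv
    rw [← Matrix.mulVec_mulVec, ← Matrix.mulVec_mulVec, Matrix.dotProduct_mulVec,
      Matrix.vecMul_transpose]
    apply hp
    intro h0
    apply hv
    funext j
    have h := congr_fun h0 (⟨0, hc⟩, j)
    simpa [Jmat, Matrix.mulVec, dotProduct, boole_mul] using h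
  have hp₁ : ∀ v : Fin κ → ℝ, v ≠ 0 → 0 < v ⬝ᵥ M₁ *ᵥ v := fun v hv => by
    rw [hM₁]; exact hMpgen N₁ hpN₁ v hv
  have hp₂ : ∀ v : Fin κ → ℝ, v ≠ 0 → 0 < v ⬝ᵥ M₂ *ᵥ v := fun v hv => by
    rw [hM₂]; exact hMpgen N₂ hpN₂ v hv
  -- strict quadratic inequality
  have hquad : ∀ (M : Matrix (Fin κ) (Fin κ) ℝ),
      (∀ v : Fin κ → ℝ, v ≠ 0 → 0 < v ⬝ᵥ M *ᵥ v) →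
      ∀ a b : Fin κ, a ≠ b → M a b + M b a < M a a + M b b := by
    intro M hp a b hab
    have hv : (Pi.single a 1 - Pi.single b 1 : Fin κ → ℝ) ≠ 0 := by
      intro h
      have h2 := congr_fun h a
      simp [Pi.single_apply, hab] at h2
    have h := hp _ hv
    have hcomp : (Pi.single a 1 - Pi.single b 1 : Fin κ → ℝ) ⬝ᵥ
        M *ᵥ (Pi.single a 1 - Pi.single b 1 : Fin κ → ℝ)
        = M a a - M a b - (M b a - M b b) := by
      rw [Matrix.mulVec_sub, dotProduct_sub, sub_dotProduct,
        sub_dotProduct]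
      simp only [Matrix.mulVec_single, dotProduct_single]
      simp [Pi.sub_apply]
      ring
    rw [hcomp] at h
    linarith
  -- relation between M₁ and M₂ via π
  set π : Equiv.Perm (Fin κ) := σκ₁.trans σκ₂.symm with hπ
  have hμ'' : ∀ p, μ₁ p = μ₂ (σ₂.symm (σ₁ p)) := by
    intro p
    have h := congr_fun hμ (σ₁ p)
    rwa [_root_.vecMul_permMatrix, _root_.vecMul_permMatrix, Equiv.symm_apply_apply] at h
  have hrow : ∀ (q : Fin c × Fin κ) (k : Fin κ),
      (∑ i : Fin c, E₁ q (i, k)) = ∑ i : Fin c, E₂ (σ₂.symm (σ₁ q)) (i, k) := by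
    intro q k
    have h := congr_fun (congr_fun hM (σ₁ q)) k
    rwa [permT_mul_J_apply, permT_mul_J_apply, Equiv.symm_apply_apply] at h
  have hps : ∀ (i : Fin c) (j : Fin κ),
      σ₂.symm (σ₁ (i, j)) = ((σc₁.trans σc₂.symm) i, π j) := by
    intro i j
    simp [hσ₁, hσ₂, hπ]
  have hrel : ∀ j k, M₁ j k = M₂ (π j) k := by
    intro j k
    rw [hM₁, hM₂, JtNJ_apply, JtNJ_apply]
    have hN1e : ∀ a b, N₁ a b = μ₁ a * E₁ a b := fun a b => by
      rw [hN₁, Matrix.diagonal_mul]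
    have hN2e : ∀ a b, N₂ a b = μ₂ a * E₂ a b := fun a b => by
      rw [hN₂, Matrix.diagonal_mul]
    calc (∑ i : Fin c, ∑ i' : Fin c, N₁ (i, j) (i', k))
        = ∑ i : Fin c, μ₁ (i, j) * ∑ i' : Fin c, E₁ (i, j) (i', k) := by
          refine Finset.sum_congr rfl fun i _ => ?_
          rw [Finset.mul_sum]
          exact Finset.sum_congr rfl fun i' _ => hN1e _ _
      _ = ∑ i : Fin c, μ₂ ((σc₁.trans σc₂.symm) i, π j) *
            ∑ i' : Fin c, E₂ ((σc₁.trans σc₂.symm) i, π j) (i', k) := by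
          refine Finset.sum_congr rfl fun i _ => ?_
          rw [hμ'' (i, j), hrow (i, j) k, hps i j]
      _ = ∑ i : Fin c, μ₂ (i, π j) * ∑ i' : Fin c, E₂ (i, π j) (i', k) :=
          Equiv.sum_comp (σc₁.trans σc₂.symm)
            (fun i => μ₂ (i, π j) * ∑ i' : Fin c, E₂ (i, π j) (i', k))
      _ = ∑ i : Fin c, ∑ i' : Fin c, N₂ (i, π j) (i', k) := by
          refine Finset.sum_congr rfl fun i _ => ?_
          rw [Finset.mul_sum]
          exact Finset.sum_congr rfl fun i' _ => (hN2e _ _).symm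
  -- π is not the identity
  have hπne : ∃ j, π j ≠ j := by
    by_contra hall
    push_neg at hall
    apply hfin
    refine Equiv.ext fun j => ?_
    have h := hall j
    rw [hπ] at h
    simp only [Equiv.trans_apply] at h
    exact ((Equiv.symm_apply_eq σκ₂).1 h)
  obtain ⟨j₀, hj₀⟩ := hπne
  -- trace comparison 1 : tr M₁ < tr M₂
  have key1 : ∑ j, M₁ j j < ∑ j, M₂ j j := by
    have hle : ∀ j ∈ Finset.univ, M₁ j j ≤ (M₂ (π j) (π j) + M₂ j j) / 2 := by
      intro j _
      rw [hrel j j]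
      rcases eq_or_ne (π j) j with h | h
      · rw [h]; linarith
      · have hq := hquad M₂ hp₂ (π j) j h
        have hs := hMsym₂ (π j) j
        linarith
    have hlt : M₁ j₀ j₀ < (M₂ (π j₀) (π j₀) + M₂ j₀ j₀) / 2 := by
      rw [hrel j₀ j₀]
      have hq := hquad M₂ hp₂ (π j₀) j₀ hj₀
      have hs := hMsym₂ (π j₀) j₀
      linarith
    have h1 := Finset.sum_lt_sum hle ⟨j₀, Finset.mem_univ _, hlt⟩
    have e1 : ∑ j, M₂ (π j) (π j) = ∑ j, M₂ j j := Equiv.sum_comp π fun j => M₂ j j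
    have h2 : ∑ j, (M₂ (π j) (π j) + M₂ j j) / 2 = ∑ j, M₂ j j := by
      rw [← Finset.sum_div, Finset.sum_add_distrib, e1]
      ring
    linarith
  -- trace comparison 2 : tr M₂ < tr M₁
  have hrel' : ∀ j k, M₂ j k = M₁ (π.symm j) k := by
    intro j k
    have h := hrel (π.symm j) k
    rw [Equiv.apply_symm_apply] at h
    exact h.symm
  have key2 : ∑ j, M₂ j j < ∑ j, M₁ j j := by
    have hle : ∀ j ∈ Finset.univ, M₂ j j ≤ (M₁ (π.symm j) (π.symm j) + M₁ j j) / 2 := by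
      intro j _
      rw [hrel' j j]
      rcases eq_or_ne (π.symm j) j with h | h
      · rw [h]; linarith
      · have hq := hquad M₁ hp₁ (π.symm j) j h
        have hs := hMsym₁ (π.symm j) j
        linarith
    have hj₀' : π.symm (π j₀) ≠ π j₀ := by
      rw [Equiv.symm_apply_apply]
      exact Ne.symm hj₀
    have hlt : M₂ (π j₀) (π j₀) < (M₁ (π.symm (π j₀)) (π.symm (π j₀)) + M₁ (π j₀) (π j₀)) / 2 := by
      rw [hrel' (π j₀) (π j₀)]
      have hq := hquad M₁ hp₁ (π.symm (π j₀)) (π j₀) hj₀'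
      have hs := hMsym₁ (π.symm (π j₀)) (π j₀)
      linarith
    have h1 := Finset.sum_lt_sum hle ⟨π j₀, Finset.mem_univ _, hlt⟩
    have e1 : ∑ j, M₁ (π.symm j) (π.symm j) = ∑ j, M₁ j j :=
      Equiv.sum_comp π.symm fun j => M₁ j j
    have h2 : ∑ j, (M₁ (π.symm j) (π.symm j) + M₁ j j) / 2 = ∑ j, M₁ j j := by
      rw [← Finset.sum_div, Finset.sum_add_distrib, e1]
      ring
    linarith
  linarith
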